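/- arXiv:0907.2730 — 2 statements merged into one kernel-verified Lean document; each statement's English description precedes it below -/
import Mathlib

section
/- Let G be a finite connected simple graph and let v₀ be a vertex of G lying on every simple loop of G, i.e., for every vertex u and every closed walk c from u to u in G that is a cycle, v₀ belongs to the support of c. Then G has a spanning tree T — a connected acyclic subgraph of G containing every vertex of G — such that every edge of G not belonging to T is incident to v₀. -/
open SimpleGraph

/-- Adding an edge between two vertices not reachable from each other in an acyclic
graph keeps the graph acyclic. -/
lemma acyclic_sup_edge {V : Type} {T : SimpleGraph V} {a b : V}
    (hT : T.IsAcyclic) (_hab : a ≠ b) (hnr : ¬ T.Reachable a b) :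
    (T ⊔ SimpleGraph.fromEdgeSet {s(a, b)}).IsAcyclic := by
  intro u c hc
  by_cases he : s(a, b) ∈ c.edges
  · have hadj : (T ⊔ SimpleGraph.fromEdgeSet {s(a, b)}).Adj a b ∧
        ((T ⊔ SimpleGraph.fromEdgeSet {s(a, b)}) \ SimpleGraph.fromEdgeSet {s(a, b)}).Reachable a b := by
      refine SimpleGraph.adj_and_reachable_delete_edges_iff_exists_cycle.mpr ?_
      exact ⟨u, c, hc, he⟩
    refine hnr (hadj.2.mono ?_)
    calc (T ⊔ SimpleGraph.fromEdgeSet {s(a, b)}) \ SimpleGraph.fromEdgeSet {s(a, b)}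
        = T \ SimpleGraph.fromEdgeSet {s(a, b)} := sup_sdiff_right_self
      _ ≤ T := sdiff_le
  · have hsub : ∀ e ∈ c.edges, e ∈ T.edgeSet := by
      intro e hec
      have := c.edges_subset_edgeSet hec
      rw [SimpleGraph.edgeSet_sup] at this
      rcases this with h | h
      · exact h
      · exfalso
        have : e = s(a, b) := by
          have := SimpleGraph.edgeSet_fromEdgeSet ({s(a, b)} : Set (Sym2 V)) ▸ h
          exact this.1
        exact he (this ▸ hec)
    exact hT (c.transfer T hsub) (hc.transfer hsub)

/-- If `v₀` lies on every simple loop of a finite connected simple graph `G`, then `G`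
has a spanning tree `T` (a connected acyclic subgraph on the full vertex set) such that
every edge of `G` not in `T` is incident to `v₀`. -/
theorem exists_spanning_tree_deleted_edges_at_vertex {V : Type} [Fintype V]
    (G : SimpleGraph V) (hconn : G.Connected) (v₀ : V)
    (hv₀ : ∀ (u : V) (c : G.Walk u u), c.IsCycle → v₀ ∈ c.support) :
    ∃ T : SimpleGraph V, T ≤ G ∧ T.IsTree ∧
      ∀ i j : V, G.Adj i j → ¬ T.Adj i j → v₀ = i ∨ v₀ = j := by
  classical
  -- the graph of edges of `G` not incident to `v₀`
  let H : SimpleGraph V :=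
    { Adj := fun x y => G.Adj x y ∧ x ≠ v₀ ∧ y ≠ v₀
      symm := ⟨by rintro x y ⟨h, hx, hy⟩; exact ⟨h.symm, hy, hx⟩⟩
      loopless := ⟨by rintro x ⟨h, -, -⟩; exact G.loopless.irrefl x h⟩ }
  have hHG : H ≤ G := fun x y h => h.1
  have hH : H.IsAcyclic := by
    intro u c hc
    have hc' : (c.transfer G (fun e he => SimpleGraph.edgeSet_mono hHG (c.edges_subset_edgeSet he))).IsCycle :=
      hc.transfer _
    have hmem : v₀ ∈ c.support := by
      have := hv₀ u _ hc'
      rwa [SimpleGraph.Walk.support_transfer] at this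
    have hcyc := hc.rotate hmem
    cases hrot : c.rotate v₀ hmem with
    | nil => rw [hrot] at hcyc; exact hcyc.ne_nil rfl
    | cons h q => rw [hrot] at hcyc; exact h.2.1 rfl
  -- take a maximal acyclic graph between `H` and `G`
  let S : Set (SimpleGraph V) := {T | H ≤ T ∧ T ≤ G ∧ T.IsAcyclic}
  obtain ⟨T, hTS, hmax⟩ :=
    Set.Finite.exists_maximalFor id S (Set.toFinite S) ⟨H, le_refl H, hHG, hH⟩
  obtain ⟨hHT, hTG, hTacyc⟩ := hTS
  haveI : Nonempty V := hconn.nonempty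
  have hpre : T.Preconnected := by
    by_contra hpc
    have key : ∃ a b, G.Adj a b ∧ ¬ T.Reachable a b := by
      by_contra hk
      push_neg at hk
      apply hpc
      intro x y
      obtain ⟨p⟩ := hconn.preconnected x y
      induction p with
      | nil => exact SimpleGraph.Reachable.refl _
      | cons h q ih => exact (hk _ _ h).trans ih
    obtain ⟨a, b, hGab, hnr⟩ := key
    have hmemE : s(a, b) ∈ (SimpleGraph.fromEdgeSet {s(a, b)}).edgeSet := by
      rw [SimpleGraph.edgeSet_fromEdgeSet]
      exact ⟨rfl, hGab.ne⟩
    have hT'adj : (T ⊔ SimpleGraph.fromEdgeSet {s(a, b)}).Adj a b :=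
      Or.inr ((SimpleGraph.fromEdgeSet_adj _).mpr ⟨rfl, hGab.ne⟩)
    have hT'G : T ⊔ SimpleGraph.fromEdgeSet {s(a, b)} ≤ G := by
      apply sup_le hTG
      intro x y hxy
      rw [SimpleGraph.fromEdgeSet_adj] at hxy
      obtain ⟨hx, -⟩ := hxy
      rcases Sym2.eq_iff.mp hx with ⟨rfl, rfl⟩ | ⟨rfl, rfl⟩
      · exact hGab
      · exact hGab.symm
    have hT'S : T ⊔ SimpleGraph.fromEdgeSet {s(a, b)} ∈ S :=
      ⟨hHT.trans le_sup_left, hT'G, acyclic_sup_edge hTacyc hGab.ne hnr⟩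
    have := hmax hT'S le_sup_left
    apply hnr
    have : T.Adj a b := this hT'adj
    exact this.reachable
  refine ⟨T, hTG, ⟨⟨hpre⟩, hTacyc⟩, ?_⟩
  intro i j hGij hnT
  by_contra hcon
  push_neg at hcon
  exact hnT (hHT ⟨hGij, Ne.symm hcon.1, Ne.symm hcon.2⟩)
end

section
/- Let S be a five-element type with elements named A, B, C, e₁, e₂, and let R ⊆ FreeGroup S consist of the single relator ⁅e₂, A·e₁·A⁻¹⁆ = e₂·A·e₁·A⁻¹·e₂⁻¹·A·e₁⁻¹·A⁻¹. Then the presented group ⟨S ∣ R⟩ is isomorphic to the free product (coproduct of groups) of the free group on three generators, FreeGroup (Fin 3), with the free abelian group ℤ² (i.e., Multiplicative (ℤ × ℤ)). -/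
/-- A five-element generating set `{A, B, C, e₁, e₂}`. -/
inductive FiveGen : Type
  | A : FiveGen
  | B : FiveGen
  | C : FiveGen
  | e₁ : FiveGen
  | e₂ : FiveGen

open FiveGen in
open scoped commutatorElement in
/-- The single relator `⁅e₂, A e₁ A⁻¹⁆`. -/
def fiveRel : Set (FreeGroup FiveGen) :=
  {⁅FreeGroup.of e₂, FreeGroup.of A * FreeGroup.of e₁ * (FreeGroup.of A)⁻¹⁆}

namespace FiveAux

open FiveGen Monoid
open scoped commutatorElement

abbrev T := Monoid.Coprod (FreeGroup (Fin 3)) (Multiplicative (ℤ × ℤ))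

def a : Multiplicative (ℤ × ℤ) := Multiplicative.ofAdd ((1 : ℤ), (0 : ℤ))
def b : Multiplicative (ℤ × ℤ) := Multiplicative.ofAdd ((0 : ℤ), (1 : ℤ))

def fgen : FiveGen → T
  | A => Coprod.inl (FreeGroup.of 0)
  | B => Coprod.inl (FreeGroup.of 1)
  | C => Coprod.inl (FreeGroup.of 2)
  | e₁ => (Coprod.inl (FreeGroup.of 0))⁻¹ * Coprod.inr a * Coprod.inl (FreeGroup.of 0)
  | e₂ => Coprod.inr b

lemma lift_conj :
    FreeGroup.lift fgen (FreeGroup.of A * FreeGroup.of e₁ * (FreeGroup.of A)⁻¹) =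
      Coprod.inr a := by
  simp only [map_mul, map_inv, FreeGroup.lift_apply_of, fgen]
  group

lemma hrel : ∀ r ∈ fiveRel, FreeGroup.lift fgen r = 1 := by
  intro r hr
  rcases hr with rfl
  rw [map_commutatorElement, lift_conj, FreeGroup.lift_apply_of]
  show ⁅Coprod.inr b, Coprod.inr a⁆ = 1
  exact commutatorElement_eq_one_iff_commute.mpr (((Commute.all b a).map _))

noncomputable def f : PresentedGroup fiveRel →* T := PresentedGroup.toGroup hrel

noncomputable def x : PresentedGroup fiveRel :=
  PresentedGroup.of A * PresentedGroup.of e₁ * (PresentedGroup.of A)⁻¹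

noncomputable def y : PresentedGroup fiveRel := PresentedGroup.of e₂

lemma hcomm : Commute x y := by
  have h1 : (QuotientGroup.mk' (Subgroup.normalClosure fiveRel))
      ⁅FreeGroup.of e₂, FreeGroup.of A * FreeGroup.of e₁ * (FreeGroup.of A)⁻¹⁆ = 1 := by
    rw [QuotientGroup.mk'_apply, QuotientGroup.eq_one_iff]
    exact Subgroup.subset_normalClosure rfl
  rw [map_commutatorElement] at h1
  exact (commutatorElement_eq_one_iff_commute.mp h1).symm

noncomputable def gZ : Multiplicative (ℤ × ℤ) →* PresentedGroup fiveRel :=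
  (MonoidHom.noncommCoprod (zpowersHom _ x) (zpowersHom _ y)
      (fun m n => (hcomm.zpow_zpow m.toAdd n.toAdd))).comp
    (MulEquiv.prodMultiplicative ℤ ℤ).toMonoidHom

noncomputable def gF : FreeGroup (Fin 3) →* PresentedGroup fiveRel :=
  FreeGroup.lift ![PresentedGroup.of A, PresentedGroup.of B, PresentedGroup.of C]

noncomputable def g : T →* PresentedGroup fiveRel := Coprod.lift gF gZ

lemma gZ_apply (z : Multiplicative (ℤ × ℤ)) : gZ z = x ^ z.toAdd.1 * y ^ z.toAdd.2 := rfl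

lemma gf : g.comp f = MonoidHom.id _ := by
  apply PresentedGroup.ext
  intro s
  cases s <;>
    simp [f, g, gF, gZ_apply, fgen, a, b, PresentedGroup.toGroup.of, Coprod.lift_apply_inl,
      Coprod.lift_apply_inr, map_mul, map_inv, x, y]
  group

lemma f_x : f x = Coprod.inr a := by
  simp only [f, x, map_mul, map_inv, PresentedGroup.toGroup.of, fgen]
  group

lemma f_y : f y = Coprod.inr b := by
  simp [f, y, PresentedGroup.toGroup.of, fgen]

lemma fg : f.comp g = MonoidHom.id _ := by
  apply Coprod.hom_ext
  · apply FreeGroup.ext_hom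
    intro i
    fin_cases i <;>
      simp [f, g, gF, Coprod.lift_apply_inl, PresentedGroup.toGroup.of, fgen]
  · refine MonoidHom.ext fun z => ?_
    simp only [MonoidHom.comp_apply, MonoidHom.id_apply]
    rw [g, Coprod.lift_apply_inr, gZ_apply, map_mul, map_zpow, map_zpow, f_x, f_y,
      ← map_zpow, ← map_zpow, ← map_mul]
    congr 1
    show Multiplicative.ofAdd _ ^ _ * Multiplicative.ofAdd _ ^ _ = z
    rw [← ofAdd_zsmul, ← ofAdd_zsmul, ← ofAdd_add]
    show Multiplicative.ofAdd (_ • ((1:ℤ),(0:ℤ)) + _ • ((0:ℤ),(1:ℤ))) = z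
    simp [Prod.ext_iff]

end FiveAux

/-- The group `⟨A, B, C, e₁, e₂ ∣ [e₂, A e₁ A⁻¹]⟩` is isomorphic to the free product
`F₃ ∗ ℤ²`. -/
theorem presentedGroup_five_gen_one_commutator_relator :
    Nonempty (PresentedGroup fiveRel ≃*
      Monoid.Coprod (FreeGroup (Fin 3)) (Multiplicative (ℤ × ℤ))) := by
  exact ⟨MonoidHom.toMulEquiv FiveAux.f FiveAux.g FiveAux.gf FiveAux.fg⟩
end
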